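/- Assume the following form of Martin's Axiom: for every nonempty partially ordered set P satisfying the countable chain condition (every set of pairwise incompatible elements of P is countable, where p, q ∈ P are compatible if they have a common upper bound in P) and every family 𝒟 of fewer than 2^ℵ₀ dense subsets of P (D ⊆ P is dense if for every p ∈ P there is q ∈ D with p ≤ q), there exists an upward-directed subset F ⊆ P intersecting every member of 𝒟. Then every ℵ₂-free abelian group G of cardinality less than 2^ℵ₀ is separable: for every e ∈ G of infinite order generating a pure cyclic subgroup ⟨e⟩ of G, the subgroup ⟨e⟩ is a direct summand of G (equivalently, there is a homomorphism Φ : G → ℤ with Φ(e) = 1). -/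

import Mathlib

open Cardinal

namespace Sep51


variable {G : Type} [AddCommGroup G]

/-- The "pure closure" of a submodule in a torsion-free group. -/
def pclose (U : Submodule ℤ G) : Submodule ℤ G where
  carrier := {x | ∃ n : ℤ, n ≠ 0 ∧ n • x ∈ U}
  zero_mem' := ⟨1, one_ne_zero, by simpa using U.zero_mem⟩
  add_mem' := by
    rintro x y ⟨n, hn, hnx⟩ ⟨m, hm, hmy⟩
    refine ⟨n * m, mul_ne_zero hn hm, ?_⟩
    have hx' : (n * m) • x = m • (n • x) := by rw [mul_comm, mul_smul]
    have hy' : (n * m) • y = n • (m • y) := mul_smul n m y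
    rw [smul_add, hx', hy']
    exact U.add_mem (U.smul_mem _ hnx) (U.smul_mem _ hmy)
  smul_mem' := by
    rintro c x ⟨n, hn, hnx⟩
    exact ⟨n, hn, by rw [smul_comm]; exact U.smul_mem _ hnx⟩

theorem le_pclose (U : Submodule ℤ G) : U ≤ pclose U :=
  fun x hx => ⟨1, one_ne_zero, by simpa using hx⟩

theorem mem_pclose {U : Submodule ℤ G} {x : G} :
    x ∈ pclose U ↔ ∃ n : ℤ, n ≠ 0 ∧ n • x ∈ U := Iff.rfl

/-- `MClosed U` means `U` is pure (closed under division) in `G`. -/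
def MClosed (U : Submodule ℤ G) : Prop :=
  ∀ (n : ℤ) (x : G), n ≠ 0 → n • x ∈ U → x ∈ U

theorem mclosed_pclose (U : Submodule ℤ G) : MClosed (pclose U) := by
  rintro n x hn ⟨m, hm, hmx⟩
  exact ⟨m * n, mul_ne_zero hm hn, by rwa [mul_smul]⟩

theorem pclose_le {U H : Submodule ℤ G} (hUH : U ≤ H) (hH : MClosed H) :
    pclose U ≤ H := by
  rintro x ⟨n, hn, hnx⟩
  exact hH n x hn (hUH hnx)

theorem countable_pclose [NoZeroSMulDivisors ℤ G] (U : Submodule ℤ G) [h : Countable U] :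
    Countable (pclose U) := by
  have : ∀ x : pclose U, ∃ n : ℤ, n ≠ 0 ∧ n • (x : G) ∈ U := fun x => x.2
  choose n hn0 hnU using this
  have hinj : Function.Injective (fun x : pclose U => ((n x, ⟨n x • (x : G), hnU x⟩) : ℤ × U)) := by
    intro x y hxy
    simp only [Prod.mk.injEq, Subtype.mk.injEq] at hxy
    obtain ⟨h1, h2⟩ := hxy
    rw [h1] at h2
    have := smul_right_injective G (hn0 y) h2
    exact Subtype.ext this
  exact Function.Injective.countable hinj

theorem mk_pclose_le [NoZeroSMulDivisors ℤ G] (U : Submodule ℤ G) :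
    #(pclose U) ≤ ℵ₀ * #U := by
  have : ∀ x : pclose U, ∃ n : ℤ, n ≠ 0 ∧ n • (x : G) ∈ U := fun x => x.2
  choose n hn0 hnU using this
  have hinj : Function.Injective (fun x : pclose U => ((n x, ⟨n x • (x : G), hnU x⟩) : ℤ × U)) := by
    intro x y hxy
    simp only [Prod.mk.injEq, Subtype.mk.injEq] at hxy
    obtain ⟨h1, h2⟩ := hxy
    rw [h1] at h2
    exact Subtype.ext (smul_right_injective G (hn0 y) h2)
  calc #(pclose U) ≤ #(ℤ × U) := Cardinal.mk_le_of_injective hinj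
    _ = ℵ₀ * #U := by rw [Cardinal.mk_prod]; simp

theorem mk_span_le (X : Set G) : #(Submodule.span ℤ X) ≤ max ℵ₀ #X := by
  rcases X.eq_empty_or_nonempty with rfl | hX
  · simp only [Submodule.span_empty]
    calc #(⊥ : Submodule ℤ G) ≤ ℵ₀ := by
          simpa using (Cardinal.mk_le_aleph0_iff.2 inferInstance)
      _ ≤ _ := le_max_left _ _
  · have : Nonempty X := hX.to_subtype
    rw [Finsupp.span_eq_range_linearCombination ℤ X]
    calc #(LinearMap.range (Finsupp.linearCombination ℤ ((↑) : X → G)))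
        ≤ #(X →₀ ℤ) := Cardinal.mk_range_le
      _ = max #X ℵ₀ := by
          rw [Cardinal.mk_finsupp_lift_of_infinite' X ℤ]; simp
      _ = max ℵ₀ #X := max_comm _ _

theorem countable_of_fg {U : Submodule ℤ G} (h : U.FG) : Countable U := by
  obtain ⟨n, v, hv⟩ := Submodule.fg_iff_exists_fin_generating_family.1 h
  have hsurj : Function.Surjective
      (fun c : Fin n → ℤ => (⟨∑ i, c i • v i, by
        rw [← hv]; exact Submodule.sum_mem _ fun i _ => Submodule.smul_mem _ _
          (Submodule.subset_span (Set.mem_range_self i))⟩ : U)) := by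
    rintro ⟨x, hx⟩
    rw [← hv] at hx
    obtain ⟨c, hc⟩ := (Submodule.mem_span_range_iff_exists_fun ℤ).1 hx
    exact ⟨c, Subtype.ext hc⟩
  exact hsurj.countable




theorem free_submodule (hG : ∀ S : AddSubgroup G, #S ≤ Cardinal.aleph 1 → Module.Free ℤ S)
    (U : Submodule ℤ G) (h : #U ≤ Cardinal.aleph 1) : Module.Free ℤ U := by
  haveI := hG U.toAddSubgroup h
  let eqv : (U.toAddSubgroup : Type) ≃+ U :=
    { toFun := fun x => ⟨x.1, x.2⟩
      invFun := fun x => ⟨x.1, x.2⟩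
      left_inv := fun x => rfl
      right_inv := fun x => rfl
      map_add' := fun x y => rfl }
  exact Module.Free.of_equiv eqv.toIntLinearEquiv


theorem fg_of_between [NoZeroSMulDivisors ℤ G] {W U : Submodule ℤ G}
    (hfree : Module.Free ℤ U) (hW : W.FG) (hWU : W ≤ U)
    (hU : ∀ u ∈ U, ∃ n : ℤ, n ≠ 0 ∧ n • u ∈ W) : U.FG := by
  classical
  let ι := Module.Free.ChooseBasisIndex ℤ U
  let b : Module.Basis ι ℤ U := Module.Free.chooseBasis ℤ U
  obtain ⟨n, v, hv⟩ := Submodule.fg_iff_exists_fin_generating_family.1 hW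
  have hvW : ∀ i, v i ∈ W := fun i => hv ▸ Submodule.subset_span (Set.mem_range_self i)
  let v' : Fin n → U := fun i => ⟨v i, hWU (hvW i)⟩
  let J : Finset ι := Finset.univ.biUnion fun i => (b.repr (v' i)).support
  have hv'J : ∀ i, b.repr (v' i) ∈ Finsupp.supported ℤ ℤ (J : Set ι) := by
    intro i
    rw [Finsupp.mem_supported]
    intro x hx
    exact Finset.mem_coe.2 (Finset.mem_biUnion.2 ⟨i, Finset.mem_univ i, hx⟩)
  -- every element of W (seen inside U) has repr supported in J
  have claim1 : ∀ w : U, (w : G) ∈ W → b.repr w ∈ Finsupp.supported ℤ ℤ (J : Set ι) := by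
    intro w hw
    have hwspan : w ∈ Submodule.span ℤ (Set.range v') := by
      have h1 : Submodule.map U.subtype (Submodule.span ℤ (Set.range v')) = W := by
        rw [Submodule.map_span, ← Set.range_comp]
        have : (U.subtype ∘ v') = v := funext fun i => rfl
        rw [this, hv]
      have : (w : G) ∈ Submodule.map U.subtype (Submodule.span ℤ (Set.range v')) := h1 ▸ hw
      obtain ⟨u, hu, huw⟩ := this
      rwa [show u = w from Subtype.ext huw] at hu
    have : b.repr w ∈ Submodule.map (b.repr : U →ₗ[ℤ] (ι →₀ ℤ)) (Submodule.span ℤ (Set.range v')) :=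
      Submodule.mem_map_of_mem hwspan
    rw [Submodule.map_span, ← Set.range_comp] at this
    refine Submodule.span_le.2 ?_ this
    rintro f ⟨i, rfl⟩
    exact hv'J i
  have claim2 : ∀ u : U, b.repr u ∈ Finsupp.supported ℤ ℤ (J : Set ι) := by
    intro u
    obtain ⟨m, hm, hmu⟩ := hU (u : G) u.2
    have h1 : b.repr (m • u) ∈ Finsupp.supported ℤ ℤ (J : Set ι) := claim1 (m • u) hmu
    rw [map_smul] at h1
    rw [Finsupp.mem_supported] at h1 ⊢
    rwa [Finsupp.support_smul_eq hm] at h1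
  have htop : (⊤ : Submodule ℤ U) = Submodule.span ℤ (b '' (J : Set ι)) := by
    refine le_antisymm (fun u _ => ?_) le_top
    rw [Finsupp.mem_span_image_iff_linearCombination]
    exact ⟨b.repr u, claim2 u, b.linearCombination_repr u⟩
  rw [← Submodule.fg_top]
  rw [htop]
  exact Submodule.fg_span ((J.finite_toSet).image b)

theorem extend_mclosed [NoZeroSMulDivisors ℤ G] {U V : Submodule ℤ G} (hUV : U ≤ V)
    (hU : ∀ (n : ℤ) (x : G), n ≠ 0 → n • x ∈ U → x ∈ U) (hV : V.FG) (φ : U →ₗ[ℤ] ℤ) :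
    ∃ ψ : V →ₗ[ℤ] ℤ, ∀ (x : G) (hx : x ∈ U), ψ ⟨x, hUV hx⟩ = φ ⟨x, hx⟩ := by
  let U' : Submodule ℤ V := U.comap V.subtype
  haveI : Module.Finite ℤ V := Module.Finite.iff_fg.2 hV
  haveI : NoZeroSMulDivisors ℤ (V ⧸ U') := by
    constructor
    intro n q hq
    by_cases hn : n = 0
    · exact Or.inl hn
    · refine Or.inr ?_
      obtain ⟨v, rfl⟩ := Submodule.Quotient.mk_surjective U' q
      rw [← Submodule.Quotient.mk_smul, Submodule.Quotient.mk_eq_zero] at hq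
      rw [Submodule.Quotient.mk_eq_zero]
      have : n • (v : G) ∈ U := hq
      exact hU n (v : G) hn this
  haveI : Module.Free ℤ (V ⧸ U') := Module.free_of_finite_type_torsion_free'
  obtain ⟨σ, hσ⟩ := Module.projective_lifting_property U'.mkQ (LinearMap.id : (V ⧸ U') →ₗ[ℤ] (V ⧸ U'))
    (Submodule.mkQ_surjective U')
  have hmem : ∀ v : V, v - σ (U'.mkQ v) ∈ U' := by
    intro v
    rw [← Submodule.Quotient.mk_eq_zero, Submodule.Quotient.mk_sub]
    have : U'.mkQ (σ (U'.mkQ v)) = U'.mkQ v := congrFun (congrArg DFunLike.coe hσ) (U'.mkQ v)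
    change U'.mkQ v - U'.mkQ (σ (U'.mkQ v)) = 0
    rw [this, sub_self]
  let ρ : V →ₗ[ℤ] U := by
    refine
      { toFun := fun v => ⟨(v : G) - (σ (U'.mkQ v) : G), ?_⟩
        map_add' := ?_
        map_smul' := ?_ }
    · have := hmem v
      exact this
    · intro x y
      apply Subtype.ext
      push_cast [map_add]
      abel
    · intro c x
      apply Subtype.ext
      push_cast [map_smul]
      simp [smul_sub]
  refine ⟨φ.comp ρ, ?_⟩
  intro x hx
  have h0 : U'.mkQ ⟨x, hUV hx⟩ = 0 := (Submodule.Quotient.mk_eq_zero _).2 hx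
  simp only [Submodule.mkQ_apply] at h0
  simp only [LinearMap.comp_apply]
  congr 1
  apply Subtype.ext
  simp [ρ, h0]




structure Cond (G : Type) [AddCommGroup G] (e : G) : Type where
  S : Submodule ℤ G
  φ : S →ₗ[ℤ] ℤ
  fg : S.FG
  closed : ∀ (n : ℤ) (x : G), n ≠ 0 → n • x ∈ S → x ∈ S
  mem_e : e ∈ S
  map_e : φ ⟨e, mem_e⟩ = 1

variable {e : G}

open Classical in
/-- Total-function version of the partial homomorphism. -/
noncomputable def Cond.fn (p : Cond G e) (x : G) : ℤ :=
  if h : x ∈ p.S then p.φ ⟨x, h⟩ else 0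

theorem Cond.fn_mem (p : Cond G e) {x : G} (hx : x ∈ p.S) : p.fn x = p.φ ⟨x, hx⟩ := by
  simp [Cond.fn, hx]

theorem Cond.fn_add (p : Cond G e) {x y : G} (hx : x ∈ p.S) (hy : y ∈ p.S) :
    p.fn (x + y) = p.fn x + p.fn y := by
  rw [p.fn_mem hx, p.fn_mem hy, p.fn_mem (p.S.add_mem hx hy), ← map_add]
  rfl

theorem Cond.fn_smul (p : Cond G e) (n : ℤ) {x : G} (hx : x ∈ p.S) :
    p.fn (n • x) = n * p.fn x := by
  rw [p.fn_mem hx, p.fn_mem (p.S.smul_mem n hx)]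
  have : (⟨n • x, p.S.smul_mem n hx⟩ : p.S) = n • (⟨x, hx⟩ : p.S) := rfl
  rw [this, map_smul, smul_eq_mul]

theorem Cond.fn_e (p : Cond G e) : p.fn e = 1 := by rw [p.fn_mem p.mem_e, p.map_e]

theorem Cond.fn_zero (p : Cond G e) : p.fn 0 = 0 := by
  rw [p.fn_mem p.S.zero_mem]
  have : (⟨0, p.S.zero_mem⟩ : p.S) = 0 := rfl
  rw [this, map_zero]

instance : PartialOrder (Cond G e) where
  le p q := p.S ≤ q.S ∧ ∀ x ∈ p.S, q.fn x = p.fn x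
  le_refl p := ⟨le_rfl, fun _ _ => rfl⟩
  le_trans p q r hpq hqr := ⟨hpq.1.trans hqr.1,
    fun x hx => by rw [hqr.2 x (hpq.1 hx), hpq.2 x hx]⟩
  le_antisymm p q hpq hqp := by
    obtain ⟨S1, φ1, fg1, c1, me1, mape1⟩ := p
    obtain ⟨S2, φ2, fg2, c2, me2, mape2⟩ := q
    obtain rfl : S1 = S2 := le_antisymm hpq.1 hqp.1
    have : φ1 = φ2 := by
      apply LinearMap.ext
      rintro ⟨x, hx⟩
      have h1 := hpq.2 x hx
      rw [Cond.fn_mem _ hx, Cond.fn_mem _ hx] at h1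
      exact h1.symm
    subst this
    rfl

theorem Cond.le_def {p q : Cond G e} : p ≤ q ↔ p.S ≤ q.S ∧ ∀ x ∈ p.S, q.fn x = p.fn x := Iff.rfl

theorem Cond.fn_of_le {p q : Cond G e} (h : p ≤ q) {x : G} (hx : x ∈ p.S) :
    q.fn x = p.fn x := h.2 x hx

/-- The base condition on `span ℤ {e}`. -/
theorem exists_base [NoZeroSMulDivisors ℤ G]
    (he : ∀ n : ℤ, n ≠ 0 → n • e ≠ 0)
    (hpure : ∀ n : ℕ, 0 < n → ∀ x ∈ AddSubgroup.zmultiples e,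
      (∃ g : G, (n : ℤ) • g = x) → ∃ u ∈ AddSubgroup.zmultiples e, (n : ℤ) • u = x) :
    ∃ p : Cond G e, p.S = Submodule.span ℤ {e} := by
  have hinj : Function.Injective (LinearMap.toSpanSingleton ℤ G e) := by
    intro a b hab
    by_contra hne
    have : (a - b) • e = 0 := by
      have : a • e = b • e := hab
      rw [sub_smul, this, sub_self]
    exact he (a - b) (sub_ne_zero.2 hne) this
  have hspan : Submodule.span ℤ {e} = LinearMap.range (LinearMap.toSpanSingleton ℤ G e) :=
    (LinearMap.span_singleton_eq_range ℤ G e)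
  let φ0 : (Submodule.span ℤ {e} : Submodule ℤ G) →ₗ[ℤ] ℤ :=
    ((LinearEquiv.ofInjective _ hinj).symm.toLinearMap).comp (LinearEquiv.ofEq _ _ hspan).toLinearMap
  have hmeme : e ∈ Submodule.span ℤ ({e} : Set G) := Submodule.mem_span_singleton_self e
  have hclosed : ∀ (n : ℤ) (x : G), n ≠ 0 → n • x ∈ Submodule.span ℤ ({e} : Set G) →
      x ∈ Submodule.span ℤ ({e} : Set G) := by
    have key : ∀ (n : ℤ), 0 < n → ∀ (x : G), n • x ∈ Submodule.span ℤ ({e} : Set G) →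
        x ∈ Submodule.span ℤ ({e} : Set G) := by
      intro n hn x hx
      have h1 : n • x ∈ AddSubgroup.zmultiples e := by
        obtain ⟨c, hc⟩ := Submodule.mem_span_singleton.1 hx
        exact AddSubgroup.mem_zmultiples_iff.2 ⟨c, hc⟩
      have h2 : ∃ g : G, (n.toNat : ℤ) • g = n • x := ⟨x, by rw [Int.toNat_of_nonneg hn.le]⟩
      obtain ⟨u, hu, hnu⟩ := hpure n.toNat (by omega) (n • x) h1 h2
      rw [Int.toNat_of_nonneg hn.le] at hnu
      have : u = x := smul_right_injective G hn.ne' hnu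
      subst this
      obtain ⟨c, hc⟩ := AddSubgroup.mem_zmultiples_iff.1 hu
      exact Submodule.mem_span_singleton.2 ⟨c, hc⟩
    intro n x hn hx
    rcases lt_or_gt_of_ne hn with h | h
    · have : (-n) • (-x) ∈ Submodule.span ℤ ({e} : Set G) := by
        rw [smul_neg, neg_smul, neg_neg]; exact hx
      have := key (-n) (by omega) (-x) this
      simpa using Submodule.neg_mem _ this
    · exact key n h x hx
  have hφ0e : φ0 ⟨e, hmeme⟩ = 1 := by
    have h1 : (LinearEquiv.ofEq _ _ hspan) ⟨e, hmeme⟩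
        = (LinearEquiv.ofInjective (LinearMap.toSpanSingleton ℤ G e) hinj) 1 := by
      apply Subtype.ext
      show e = ((LinearEquiv.ofInjective (LinearMap.toSpanSingleton ℤ G e) hinj) 1 : G)
      rw [LinearEquiv.ofInjective_apply]
      simp [LinearMap.toSpanSingleton_apply]
    simp only [φ0, LinearMap.comp_apply, LinearEquiv.coe_coe, h1, LinearEquiv.symm_apply_apply]
  exact ⟨⟨Submodule.span ℤ {e}, φ0, Submodule.fg_span_singleton e, hclosed, hmeme, hφ0e⟩, rfl⟩

/-- Pushout of two agreeing conditions to the sup of their domains. -/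
theorem pushout (p q : Cond G e)
    (hagree : ∀ x ∈ p.S, x ∈ q.S → p.fn x = q.fn x) :
    ∃ ψ : (↥(p.S ⊔ q.S)) →ₗ[ℤ] ℤ,
      ∀ (a b : G) (_ : a ∈ p.S) (_ : b ∈ q.S) (h : a + b ∈ p.S ⊔ q.S),
        ψ ⟨a + b, h⟩ = p.fn a + q.fn b := by
  have hdec : ∀ w : ↥(p.S ⊔ q.S), ∃ y ∈ p.S, ∃ z ∈ q.S, y + z = (w : G) := by
    intro w
    exact Submodule.mem_sup.1 w.2
  choose y hy z hz hyz using hdec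
  let F : ↥(p.S ⊔ q.S) → ℤ := fun w => p.fn (y w) + q.fn (z w)
  have wd : ∀ (w : ↥(p.S ⊔ q.S)) (a b : G), a ∈ p.S → b ∈ q.S → a + b = (w : G) →
      F w = p.fn a + q.fn b := by
    intro w a b ha hb hab
    have hmemd : a - y w ∈ p.S := p.S.sub_mem ha (hy w)
    have heq : a - y w = z w - b := by
      have := (hyz w).trans hab.symm
      linear_combination (norm := abel) -this
    have hmemd' : a - y w ∈ q.S := heq ▸ q.S.sub_mem (hz w) hb
    have hd := hagree _ hmemd hmemd'
    have e1 : p.fn a = p.fn (y w) + p.fn (a - y w) := by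
      rw [← p.fn_add (hy w) hmemd]; congr 1; abel
    have e2 : q.fn b = q.fn (z w) - q.fn (a - y w) := by
      rw [hd] at *
      have : q.fn (z w) = q.fn b + q.fn (a - y w) := by
        rw [← q.fn_add hb hmemd']; congr 1; rw [heq]; abel
      omega
    simp only [F]
    omega
  have hFadd : ∀ w1 w2, F (w1 + w2) = F w1 + F w2 := by
    intro w1 w2
    have h1 : (y w1 + y w2) + (z w1 + z w2) = ((w1 + w2 : ↥(p.S ⊔ q.S)) : G) := by
      push_cast
      rw [← hyz w1, ← hyz w2]; abel
    rw [wd (w1 + w2) _ _ (p.S.add_mem (hy w1) (hy w2)) (q.S.add_mem (hz w1) (hz w2)) h1]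
    simp only [F]
    rw [p.fn_add (hy w1) (hy w2), q.fn_add (hz w1) (hz w2)]
    ring
  refine ⟨(AddMonoidHom.mk' F hFadd).toIntLinearMap, ?_⟩
  intro a b ha hb h
  exact wd ⟨a + b, h⟩ a b ha hb rfl

/-- Extension along a torsion quotient given divisibility. -/
theorem extend_div [NoZeroSMulDivisors ℤ G] {W T : Submodule ℤ G} (hWT : W ≤ T)
    (hdense : ∀ t ∈ T, ∃ n : ℤ, n ≠ 0 ∧ n • t ∈ W) (ψ : W →ₗ[ℤ] ℤ)
    (hdiv : ∀ (n : ℤ) (t : G), t ∈ T → n ≠ 0 → ∀ h : n • t ∈ W, (n ∣ ψ ⟨n • t, h⟩)) :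
    ∃ ψ' : T →ₗ[ℤ] ℤ, ∀ (x : G) (hx : x ∈ W), ψ' ⟨x, hWT hx⟩ = ψ ⟨x, hx⟩ := by
  classical
  let f : G → ℤ := fun x => if h : x ∈ W then ψ ⟨x, h⟩ else 0
  have f_mem : ∀ (x : G) (hx : x ∈ W), f x = ψ ⟨x, hx⟩ := fun x hx => dif_pos hx
  have f_add : ∀ x y, x ∈ W → y ∈ W → f (x + y) = f x + f y := by
    intro x y hx hy
    rw [f_mem x hx, f_mem y hy, f_mem (x + y) (W.add_mem hx hy), ← map_add]
    rfl
  have f_smul : ∀ (n : ℤ) (x : G), x ∈ W → f (n • x) = n * f x := by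
    intro n x hx
    rw [f_mem x hx, f_mem (n • x) (W.smul_mem n hx)]
    have : (⟨n • x, W.smul_mem n hx⟩ : W) = n • (⟨x, hx⟩ : W) := rfl
    rw [this, map_smul, smul_eq_mul]
  have hd : ∀ t : ↥T, ∃ n : ℤ, n ≠ 0 ∧ n • (t : G) ∈ W := fun t => hdense t t.2
  choose nn hnn0 hnnW using hd
  let qf : ↥T → ℚ := fun t => (f (nn t • (t : G)) : ℚ) / (nn t : ℚ)
  have indep : ∀ (t : ↥T) (m : ℤ), m ≠ 0 → m • (t : G) ∈ W → qf t = (f (m • (t : G)) : ℚ) / m := by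
    intro t m hm hmW
    have key : m * f (nn t • (t : G)) = nn t * f (m • (t : G)) := by
      have h1 : f ((m * nn t) • (t : G)) = m * f (nn t • (t : G)) := by
        rw [mul_smul]; exact f_smul m _ (hnnW t)
      have h2 : f ((m * nn t) • (t : G)) = nn t * f (m • (t : G)) := by
        rw [mul_comm, mul_smul]; exact f_smul (nn t) _ hmW
      rw [← h1, h2]
    rw [div_eq_div_iff (by exact_mod_cast hnn0 t) (by exact_mod_cast hm)]
    have key2 : f (nn t • (t : G)) * m = f (m • (t : G)) * nn t := by linarith [key]
    exact_mod_cast key2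
  have qf_add : ∀ t u : ↥T, qf (t + u) = qf t + qf u := by
    intro t u
    set N : ℤ := nn t * nn u with hN
    have hN0 : N ≠ 0 := mul_ne_zero (hnn0 t) (hnn0 u)
    have hNt : N • (t : G) ∈ W := by
      rw [hN, mul_comm, mul_smul]; exact W.smul_mem _ (hnnW t)
    have hNu : N • (u : G) ∈ W := by
      rw [hN, mul_smul]; exact W.smul_mem _ (hnnW u)
    have hNtu : N • ((t + u : ↥T) : G) ∈ W := by
      push_cast
      rw [smul_add]; exact W.add_mem hNt hNu
    rw [indep (t + u) N hN0 hNtu, indep t N hN0 hNt, indep u N hN0 hNu]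
    have hsplit : f (N • ((t + u : ↥T) : G)) = f (N • (t : G)) + f (N • (u : G)) := by
      have : N • ((t + u : ↥T) : G) = N • (t : G) + N • (u : G) := by push_cast; rw [smul_add]
      rw [this]; exact f_add _ _ hNt hNu
    rw [hsplit]
    push_cast
    ring
  have qf_int : ∀ t : ↥T, ∃ m : ℤ, qf t = (m : ℚ) := by
    intro t
    obtain ⟨c, hc⟩ := hdiv (nn t) (t : G) t.2 (hnn0 t) (hnnW t)
    refine ⟨c, ?_⟩
    have : f (nn t • (t : G)) = nn t * c := by rw [f_mem _ (hnnW t)]; exact hc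
    simp only [qf, this]
    push_cast
    rw [mul_comm, mul_div_assoc, div_self (by exact_mod_cast hnn0 t), mul_one]
  choose g hg using qf_int
  have g_add : ∀ t u : ↥T, g (t + u) = g t + g u := by
    intro t u
    have := qf_add t u
    rw [hg, hg, hg] at this
    exact_mod_cast this
  refine ⟨(AddMonoidHom.mk' g g_add).toIntLinearMap, ?_⟩
  intro x hx
  have h1 : qf ⟨x, hWT hx⟩ = (ψ ⟨x, hx⟩ : ℚ) := by
    rw [indep ⟨x, hWT hx⟩ 1 one_ne_zero (by simpa using hx)]
    simp only [one_smul]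
    rw [f_mem x hx]
    simp
  have := (hg ⟨x, hWT hx⟩).symm.trans h1
  exact_mod_cast this



theorem exists_pair_eq {ι C : Type*} {I : Set ι} (hI : ¬ I.Countable) [Countable C] (c : ι → C) :
    ∃ i ∈ I, ∃ j ∈ I, i ≠ j ∧ c i = c j := by
  by_contra hcon
  push_neg at hcon
  apply hI
  have hinj : Function.Injective (fun i : I => c i) := by
    rintro ⟨i, hi⟩ ⟨j, hj⟩ hij
    by_contra hne
    exact hcon i hi j hj (fun h => hne (Subtype.ext h)) hij
  rw [← Set.countable_coe_iff]
  exact hinj.countable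

private theorem delta_aux {ι κ : Type} [DecidableEq κ] :
    ∀ (n : ℕ) (E : ι → Finset κ) (I : Set ι), ¬ I.Countable → (∀ i ∈ I, (E i).card = n) →
    ∃ I' ⊆ I, ¬ I'.Countable ∧ ∃ R : Finset κ, ∀ i ∈ I', ∀ j ∈ I', i ≠ j → E i ∩ E j = R := by
  intro n
  induction n with
  | zero =>
    intro E I hI hcard
    refine ⟨I, le_refl _, hI, ∅, fun i hi j hj _ => ?_⟩
    have h1 : E i = ∅ := Finset.card_eq_zero.1 (hcard i hi)
    rw [h1, Finset.empty_inter]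
  | succ n ih =>
    intro E I hI hcard
    by_cases hx : ∃ x : κ, ¬ {i ∈ I | x ∈ E i}.Countable
    · obtain ⟨x, hx⟩ := hx
      set I1 := {i ∈ I | x ∈ E i} with hI1
      have hcard1 : ∀ i ∈ I1, (E i \ {x}).card = n := by
        rintro i ⟨hiI, hix⟩
        rw [Finset.card_sdiff_of_subset (Finset.singleton_subset_iff.2 hix), hcard i hiI]
        simp
      obtain ⟨I', hsub, huncount, R, hR⟩ := ih (fun i => E i \ {x}) I1 hx hcard1
      refine ⟨I', hsub.trans (Set.sep_subset _ _), huncount, insert x R, ?_⟩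
      intro i hi j hj hij
      have hxi : x ∈ E i := (hsub hi).2
      have hxj : x ∈ E j := (hsub hj).2
      have h1 := hR i hi j hj hij
      ext a
      by_cases ha : a = x
      · subst ha
        simp [hxi, hxj]
      · simp only [Finset.mem_inter, Finset.mem_insert, ha, false_or]
        rw [← h1]
        simp [ha]
    · push_neg at hx
      -- point-countable case: find an uncountable pairwise disjoint subfamily via Zorn
      let S : Set (Set ι) := {M | M ⊆ I ∧ ∀ i ∈ M, ∀ j ∈ M, i ≠ j → E i ∩ E j = ∅}
      have hchain : ∀ c ⊆ S, IsChain (· ⊆ ·) c → c.Nonempty → ∃ ub ∈ S, ∀ s ∈ c, s ⊆ ub := by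
        intro c hcS hchain hcne
        refine ⟨⋃₀ c, ⟨?_, ?_⟩, fun s hs => Set.subset_sUnion_of_mem hs⟩
        · exact Set.sUnion_subset fun s hs => (hcS hs).1
        · rintro i hi j hj hij
          obtain ⟨si, hsi, hisi⟩ := hi
          obtain ⟨sj, hsj, hjsj⟩ := hj
          rcases hchain.total hsi hsj with h | h
          · exact (hcS hsj).2 i (h hisi) j hjsj hij
          · exact (hcS hsi).2 i hisi j (h hjsj) hij
      obtain ⟨M, -, hMmax⟩ := zorn_subset_nonempty S hchain ∅ ⟨Set.empty_subset _, by simp⟩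
      have hMS : M ∈ S := hMmax.prop
      have hMuncount : ¬ M.Countable := by
        intro hMc
        apply hI
        have hU : Set.Countable (⋃ i ∈ M, (E i : Set κ)) :=
          hMc.biUnion fun i _ => (E i).finite_toSet.countable
        have hcover : I ⊆ M ∪ ⋃ x ∈ (⋃ i ∈ M, (E i : Set κ)), {i ∈ I | x ∈ E i} := by
          intro i hiI
          by_cases hiM : i ∈ M
          · exact Or.inl hiM
          · by_cases hdisj : ∀ j ∈ M, E i ∩ E j = ∅
            · exfalso
              have hins : insert i M ∈ S := by
                refine ⟨Set.insert_subset hiI hMS.1, ?_⟩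
                rintro a ha b hb hab
                rcases ha with rfl | haM
                · rcases hb with rfl | hbM
                  · exact absurd rfl hab
                  · exact hdisj b hbM
                · rcases hb with rfl | hbM
                  · rw [Finset.inter_comm]; exact hdisj a haM
                  · exact hMS.2 a haM b hbM hab
              have := hMmax.eq_of_subset hins (Set.subset_insert i M)
              rw [this] at hiM
              exact hiM (Set.mem_insert i M)
            · push_neg at hdisj
              obtain ⟨j, hjM, hne⟩ := hdisj
              obtain ⟨x, hx'⟩ := hne
              rw [Finset.mem_inter] at hx'
              refine Or.inr ?_
              refine Set.mem_biUnion ?_ ⟨hiI, hx'.1⟩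
              exact Set.mem_biUnion hjM hx'.2
        exact Set.Countable.mono hcover
          (hMc.union (hU.biUnion fun x _ => hx x))
      refine ⟨M, hMS.1, hMuncount, ∅, fun i hi j hj hij => hMS.2 i hi j hj hij⟩

theorem delta_system {ι κ : Type} [DecidableEq κ] {I : Set ι} (hI : ¬ I.Countable) (E : ι → Finset κ) :
    ∃ I' ⊆ I, ¬ I'.Countable ∧ ∃ R : Finset κ, ∀ i ∈ I', ∀ j ∈ I', i ≠ j → E i ∩ E j = R := by
  have hdecomp : I = ⋃ n : ℕ, {i ∈ I | (E i).card = n} := by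
    ext i; simp (config := {contextual := true}) [Set.mem_iUnion]
  have : ∃ n : ℕ, ¬ {i ∈ I | (E i).card = n}.Countable := by
    by_contra hall
    push_neg at hall
    exact hI (hdecomp ▸ Set.countable_iUnion hall)
  obtain ⟨n, hn⟩ := this
  obtain ⟨I', hsub, huncount, R, hR⟩ :=
    delta_aux n E {i ∈ I | (E i).card = n} hn (fun i hi => hi.2)
  exact ⟨I', hsub.trans (Set.sep_subset _ _), huncount, R, hR⟩


section BasisHelpers

variable {M : Type} [AddCommGroup M] [Module ℤ M] {ι : Type} (b : Module.Basis ι ℤ M)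

theorem mem_span_image_of_support {x : M} {J : Finset ι}
    (h : ∀ i ∈ (b.repr x).support, i ∈ J) : x ∈ Submodule.span ℤ (b '' (J : Set ι)) := by
  rw [Finsupp.mem_span_image_iff_linearCombination]
  exact ⟨b.repr x, (Finsupp.mem_supported ℤ _).2 (fun i hi => h i hi), b.linearCombination_repr x⟩

theorem support_subset_of_mem_span {x : M} {J : Finset ι}
    (h : x ∈ Submodule.span ℤ (b '' (J : Set ι))) : ∀ i ∈ (b.repr x).support, i ∈ J := by
  rw [Finsupp.mem_span_image_iff_linearCombination] at h
  obtain ⟨l, hl, rfl⟩ := h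
  rw [b.repr_linearCombination]
  exact fun i hi => (Finsupp.mem_supported ℤ _).1 hl hi

end BasisHelpers

theorem mem_span_coe_iff {G : Type} [AddCommGroup G] {H : Submodule ℤ G} (s : Set ↥H) (x : ↥H) :
    x ∈ Submodule.span ℤ s ↔ (x : G) ∈ Submodule.span ℤ (((↑) : ↥H → G) '' s) := by
  have hmap : Submodule.map H.subtype (Submodule.span ℤ s)
      = Submodule.span ℤ (((↑) : ↥H → G) '' s) := by
    rw [Submodule.map_span]; rfl
  constructor
  · intro h
    rw [← hmap]
    exact ⟨x, h, rfl⟩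
  · intro h
    rw [← hmap] at h
    obtain ⟨y, hy, hyx⟩ := h
    rwa [show y = x from Subtype.ext hyx] at hy

section CCC

variable {G : Type} [AddCommGroup G] {e : G}

theorem cond_ccc [NoZeroSMulDivisors ℤ G]
    (hG : ∀ S : AddSubgroup G, #S ≤ Cardinal.aleph 1 → Module.Free ℤ S)
    (hene : e ≠ 0)
    (A : Set (Cond G e)) (hA : ∀ p ∈ A, ∀ q ∈ A, p ≠ q → ¬∃ r : Cond G e, p ≤ r ∧ q ≤ r) :
    A.Countable := by
  classical
  by_contra hAunc
  -- cut down to a subfamily of size exactly ℵ₁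
  have h1 : Cardinal.aleph 1 ≤ #A := by
    rw [Cardinal.countable_iff_lt_aleph_one] at hAunc
    exact not_lt.1 hAunc
  obtain ⟨B, hBA, hBcard⟩ := Cardinal.le_mk_iff_exists_subset.1 h1
  have hBunc : ¬ B.Countable := by
    rw [Cardinal.countable_iff_lt_aleph_one, hBcard]
    exact lt_irrefl _
  -- the subgroup H
  set X : Set G := ⋃ p ∈ B, (p.S : Set G) with hX
  set H : Submodule ℤ G := pclose (Submodule.span ℤ X) with hH
  have hXcard : #X ≤ Cardinal.aleph 1 := by
    refine le_trans (Cardinal.mk_biUnion_le _ _) ?_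
    have hsup : ⨆ p : B, #((p : Cond G e).S : Set G) ≤ ℵ₀ := by
      refine ciSup_le' fun p => ?_
      have : Countable ((p : Cond G e).S : Set G) := countable_of_fg (p : Cond G e).fg
      exact Cardinal.mk_le_aleph0
    calc #B * ⨆ p : B, #((p : Cond G e).S : Set G)
        ≤ Cardinal.aleph 1 * ℵ₀ := by
          exact mul_le_mul' (le_of_eq hBcard) hsup
      _ = Cardinal.aleph 1 := by
          rw [Cardinal.mul_eq_max (Cardinal.aleph0_le_aleph 1) le_rfl]
          simp [Cardinal.aleph0_le_aleph 1]
  have hHcard : #H ≤ Cardinal.aleph 1 := by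
    refine le_trans (mk_pclose_le _) ?_
    have h2 : #(Submodule.span ℤ X) ≤ Cardinal.aleph 1 := by
      refine le_trans (mk_span_le X) ?_
      exact max_le (Cardinal.aleph0_le_aleph 1) hXcard
    calc ℵ₀ * #(Submodule.span ℤ X) ≤ ℵ₀ * Cardinal.aleph 1 := mul_le_mul' le_rfl h2
      _ = Cardinal.aleph 1 := by
          rw [Cardinal.mul_eq_max le_rfl (Cardinal.aleph0_le_aleph 1)]
          simp [Cardinal.aleph0_le_aleph 1]
  haveI hHfree : Module.Free ℤ (↥H) := free_submodule hG H hHcard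
  have hBH : ∀ p ∈ B, p.S ≤ H := by
    intro p hp
    refine le_trans ?_ (le_pclose _)
    intro x hx
    exact Submodule.subset_span (show x ∈ X from Set.mem_biUnion hp hx)
  have hHclosed : ∀ (n : ℤ) (x : G), n ≠ 0 → n • x ∈ H → x ∈ H := mclosed_pclose _
  -- basis of H
  set ι := Module.Free.ChooseBasisIndex ℤ (↥H) with hι
  set b : Module.Basis ι ℤ (↥H) := Module.Free.chooseBasis ℤ (↥H) with hb
  have hBne : B.Nonempty := by
    rcases B.eq_empty_or_nonempty with rfl | h
    · exact absurd Set.countable_empty hBunc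
    · exact h
  have heH : e ∈ H := hBH _ hBne.choose_spec (hBne.choose).mem_e
  -- choose generators for each condition
  have hgen : ∀ p : Cond G e, ∃ s : Σ m : ℕ, Fin m → G,
      (∀ k, s.2 k ∈ p.S) ∧ (p ∈ B → Submodule.span ℤ (Set.range s.2) = p.S) := by
    intro p
    obtain ⟨mm, v, hv⟩ := Submodule.fg_iff_exists_fin_generating_family.1 p.fg
    exact ⟨⟨mm, v⟩, fun k => hv ▸ Submodule.subset_span (Set.mem_range_self k), fun _ => hv⟩
  choose gen hgenS hgenspan using hgen
  set m : Cond G e → ℕ := fun p => (gen p).1 with hm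
  set w : (p : Cond G e) → Fin (m p) → G := fun p => (gen p).2 with hw
  set wext : Cond G e → ℕ → G := fun p k => if h : k < m p then w p ⟨k, h⟩ else 0 with hwext
  have hwextS : ∀ p k, wext p k ∈ p.S := by
    intro p k
    by_cases h : k < m p
    · simpa [hwext, h] using hgenS p ⟨k, h⟩
    · simp [hwext, h]
  set vH : Cond G e → ℕ → ↥H := fun p k => if h : wext p k ∈ H then ⟨wext p k, h⟩ else 0 with hvH
  have hvHcoe : ∀ p, p ∈ B → ∀ k, ((vH p k : ↥H) : G) = wext p k := by
    intro p hp k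
    have : wext p k ∈ H := hBH p hp (hwextS p k)
    simp [hvH, this]
  set E : Cond G e → Finset ι := fun p => (Finset.range (m p)).biUnion
    (fun k => (b.repr (vH p k)).support) with hE
  have hsuppE : ∀ p k, k < m p → ∀ i ∈ (b.repr (vH p k)).support, i ∈ E p := by
    intro p k hk i hi
    exact Finset.mem_biUnion.2 ⟨k, Finset.mem_range.2 hk, hi⟩
  have hrange : ∀ p, p ∈ B →
      (((↑) : ↥H → G) '' (Set.range fun k : Fin (m p) => vH p ↑k)) = Set.range (w p) := by
    intro p hp
    ext g
    constructor
    · rintro ⟨y, ⟨k, rfl⟩, rfl⟩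
      refine ⟨k, ?_⟩
      rw [hvHcoe p hp]
      simp [hwext, k.isLt]
    · rintro ⟨k, rfl⟩
      refine ⟨vH p ↑k, ⟨k, rfl⟩, ?_⟩
      rw [hvHcoe p hp]
      simp [hwext, k.isLt]
  have hspanE : ∀ p, p ∈ B → ∀ x : ↥H, (x : G) ∈ p.S →
      x ∈ Submodule.span ℤ (Set.range fun k : Fin (m p) => vH p ↑k) := by
    intro p hp x hx
    rw [mem_span_coe_iff, hrange p hp]
    rw [hgenspan p hp]
    exact hx
  have hspanS : ∀ p, p ∈ B → ∀ x : ↥H,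
      x ∈ Submodule.span ℤ (Set.range fun k : Fin (m p) => vH p ↑k) → (x : G) ∈ p.S := by
    intro p hp x hx
    rw [mem_span_coe_iff, hrange p hp, hgenspan p hp] at hx
    exact hx
  have hsuppS : ∀ p, p ∈ B → ∀ x : ↥H, (x : G) ∈ p.S → ∀ i ∈ (b.repr x).support, i ∈ E p := by
    intro p hp x hx
    apply support_subset_of_mem_span b
    refine Submodule.span_le.2 ?_ (hspanE p hp x hx)
    rintro y ⟨k, rfl⟩
    exact mem_span_image_of_support b (fun i hi => hsuppE p ↑k k.isLt i hi)
  -- Δ-system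
  obtain ⟨I', hI'B, hI'unc, R, hroot⟩ := delta_system hBunc E
  haveI : Nontrivial (↥H) := ⟨⟨e, heH⟩, 0, by simp [hene]⟩
  haveI : Nonempty ι := b.index_nonempty
  set F : Cond G e → Finset ι := fun p => E p \ R with hF
  set nf : Cond G e → ℕ := fun p => Fintype.card ↥(F p) with hnf
  set ρ : Cond G e → ℕ → ι := fun p l =>
    if h : l < nf p then ((Fintype.equivFin ↥(F p)).symm ⟨l, h⟩ : ι)
    else Classical.arbitrary ι with hρ
  have hρmem : ∀ p l, l < nf p → ρ p l ∈ F p := by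
    intro p l h
    simp only [hρ, dif_pos h]
    exact ((Fintype.equivFin ↥(F p)).symm ⟨l, h⟩).2
  have hρeq : ∀ p (x : ↥(F p)), ρ p ((Fintype.equivFin ↥(F p)) x) = ↑x := by
    intro p x
    have h : ((Fintype.equivFin ↥(F p)) x : ℕ) < nf p := ((Fintype.equivFin ↥(F p)) x).isLt
    simp only [hρ, dif_pos h]
    have h2 : (⟨((Fintype.equivFin ↥(F p)) x : ℕ), h⟩ : Fin (nf p))
        = (Fintype.equivFin ↥(F p)) x := rfl
    rw [h2, Equiv.symm_apply_apply]
  have hρsurj : ∀ p (x : ι), x ∈ F p → ∃ l, l < nf p ∧ ρ p l = x := fun p x hx =>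
    ⟨(Fintype.equivFin ↥(F p)) ⟨x, hx⟩, Fin.isLt _, hρeq p ⟨x, hx⟩⟩
  -- pigeonhole on the pair of sizes
  have hmn : ∃ mn : ℕ × ℕ, ¬ {p ∈ I' | m p = mn.1 ∧ nf p = mn.2}.Countable := by
    by_contra hall
    push_neg at hall
    apply hI'unc
    have hdecomp : I' = ⋃ mn : ℕ × ℕ, {p ∈ I' | m p = mn.1 ∧ nf p = mn.2} := by
      ext p
      simp only [Set.mem_iUnion, Set.mem_setOf_eq, Set.mem_sep_iff]
      exact ⟨fun h => ⟨(m p, nf p), h, rfl, rfl⟩, fun ⟨mn, h, _, _⟩ => h⟩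
    rw [hdecomp]
    exact Set.countable_iUnion hall
  obtain ⟨⟨m0, n0⟩, hI''unc⟩ := hmn
  set I'' := {p ∈ I' | m p = m0 ∧ nf p = n0} with hI''
  have hI''I' : I'' ⊆ I' := Set.sep_subset _ _
  -- the countable coloring and the pair
  set code : Cond G e → (Fin m0 → ((R → ℤ) × (Fin n0 → ℤ) × ℤ)) := fun p k =>
    (fun r => b.repr (vH p ↑k) ↑r, fun l => b.repr (vH p ↑k) (ρ p ↑l), p.fn (wext p ↑k))
    with hcode
  obtain ⟨p, hpI'', q, hqI'', hpq, hcpq⟩ := exists_pair_eq hI''unc code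
  have hpI' : p ∈ I' := hI''I' hpI''
  have hqI' : q ∈ I' := hI''I' hqI''
  have hpB : p ∈ B := hI'B hpI'
  have hqB : q ∈ B := hI'B hqI'
  have hmp : m p = m0 := hpI''.2.1
  have hmq : m q = m0 := hqI''.2.1
  have hnp : nf p = n0 := hpI''.2.2
  have hnq : nf q = n0 := hqI''.2.2
  have hEpq : E p ∩ E q = R := hroot p hpI' q hqI' hpq
  have hRp : R ⊆ E p := hEpq ▸ Finset.inter_subset_left
  have hRq : R ⊆ E q := hEpq ▸ Finset.inter_subset_right
  have hFpR : ∀ x ∈ F p, x ∉ R := fun x hx => (Finset.mem_sdiff.1 hx).2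
  have hFqR : ∀ x ∈ F q, x ∉ R := fun x hx => (Finset.mem_sdiff.1 hx).2
  have hFpE : ∀ x ∈ F p, x ∈ E p := fun x hx => (Finset.mem_sdiff.1 hx).1
  have hFqE : ∀ x ∈ F q, x ∈ E q := fun x hx => (Finset.mem_sdiff.1 hx).1
  have hFpq : ∀ x, x ∈ F p → x ∉ F q := by
    intro x hxp hxq
    have : x ∈ E p ∩ E q := Finset.mem_inter.2 ⟨hFpE x hxp, hFqE x hxq⟩
    rw [hEpq] at this
    exact hFpR x hxp this
  have hEpFq : ∀ x ∈ E p, x ∉ F q := by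
    intro x hx hxq
    have : x ∈ E p ∩ E q := Finset.mem_inter.2 ⟨hx, hFqE x hxq⟩
    rw [hEpq] at this
    exact hFqR x hxq this
  have hEqFp : ∀ x ∈ E q, x ∉ F p := by
    intro x hx hxp
    have : x ∈ E p ∩ E q := Finset.mem_inter.2 ⟨hFpE x hxp, hx⟩
    rw [hEpq] at this
    exact hFpR x hxp this
  have hRFp : ∀ x ∈ R, x ∉ F p := fun x hx hxp => hFpR x hxp hx
  have hRFq : ∀ x ∈ R, x ∉ F q := fun x hx hxq => hFqR x hxq hx
  have hmemEp : ∀ x ∈ E p, x ∉ F p → x ∈ R := by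
    intro x hx hxp
    by_contra hxR
    exact hxp (Finset.mem_sdiff.2 ⟨hx, hxR⟩)
  have hmemEq : ∀ x ∈ E q, x ∉ F q → x ∈ R := by
    intro x hx hxq
    by_contra hxR
    exact hxq (Finset.mem_sdiff.2 ⟨hx, hxR⟩)
  -- the involution of the basis index set
  set fσ : ι → ι := fun x =>
    if hx : x ∈ F p then ρ q ((Fintype.equivFin ↥(F p)) ⟨x, hx⟩) else
    if hx : x ∈ F q then ρ p ((Fintype.equivFin ↥(F q)) ⟨x, hx⟩) else x with hfσ
  have hidxp : ∀ (x : ι) (hx : x ∈ F p), ((Fintype.equivFin ↥(F p)) ⟨x, hx⟩ : ℕ) < nf q := by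
    intro x hx
    rw [hnq, ← hnp]
    exact Fin.isLt _
  have hidxq : ∀ (x : ι) (hx : x ∈ F q), ((Fintype.equivFin ↥(F q)) ⟨x, hx⟩ : ℕ) < nf p := by
    intro x hx
    rw [hnp, ← hnq]
    exact Fin.isLt _
  have hσp : ∀ (x : ι) (hx : x ∈ F p),
      fσ x = ρ q ((Fintype.equivFin ↥(F p)) ⟨x, hx⟩) := by
    intro x hx
    simp only [hfσ, dif_pos hx]
  have hσq : ∀ (x : ι) (hx : x ∈ F q),
      fσ x = ρ p ((Fintype.equivFin ↥(F q)) ⟨x, hx⟩) := by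
    intro x hx
    have hxp : x ∉ F p := fun h => hFpq x h hx
    simp only [hfσ, dif_neg hxp, dif_pos hx]
  have hσfix : ∀ x : ι, x ∉ F p → x ∉ F q → fσ x = x := by
    intro x h1 h2
    simp only [hfσ, dif_neg h1, dif_neg h2]
  have hρidx : ∀ (p1 : Cond G e) (l : ℕ) (hl : l < nf p1),
      (Fintype.equivFin ↥(F p1)) ⟨ρ p1 l, hρmem p1 l hl⟩ = ⟨l, hl⟩ := by
    intro p1 l hl
    have h1 : (⟨ρ p1 l, hρmem p1 l hl⟩ : ↥(F p1)) = (Fintype.equivFin ↥(F p1)).symm ⟨l, hl⟩ := by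
      apply Subtype.ext
      simp only [hρ, dif_pos hl]
    rw [h1, Equiv.apply_symm_apply]
  have hσρp : ∀ l : ℕ, l < nf p → fσ (ρ p l) = ρ q l := by
    intro l hl
    rw [hσp (ρ p l) (hρmem p l hl)]
    congr 1
    rw [hρidx p l hl]
  have hσρq : ∀ l : ℕ, l < nf q → fσ (ρ q l) = ρ p l := by
    intro l hl
    rw [hσq (ρ q l) (hρmem q l hl)]
    congr 1
    rw [hρidx q l hl]
  have hinv : ∀ x : ι, fσ (fσ x) = x := by
    intro x
    by_cases hx : x ∈ F p
    · rw [hσp x hx]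
      have hl : ((Fintype.equivFin ↥(F p)) ⟨x, hx⟩ : ℕ) < nf q := hidxp x hx
      rw [hσρq _ hl]
      have hl' : ((Fintype.equivFin ↥(F p)) ⟨x, hx⟩ : ℕ) < nf p := Fin.isLt _
      simp only [hρ, dif_pos hl']
      have h2 : (⟨((Fintype.equivFin ↥(F p)) ⟨x, hx⟩ : ℕ), hl'⟩ : Fin (nf p))
          = (Fintype.equivFin ↥(F p)) ⟨x, hx⟩ := rfl
      rw [h2, Equiv.symm_apply_apply]
    · by_cases hx' : x ∈ F q
      · rw [hσq x hx']
        have hl : ((Fintype.equivFin ↥(F q)) ⟨x, hx'⟩ : ℕ) < nf p := hidxq x hx'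
        rw [hσρp _ hl]
        have hl' : ((Fintype.equivFin ↥(F q)) ⟨x, hx'⟩ : ℕ) < nf q := Fin.isLt _
        simp only [hρ, dif_pos hl']
        have h2 : (⟨((Fintype.equivFin ↥(F q)) ⟨x, hx'⟩ : ℕ), hl'⟩ : Fin (nf q))
            = (Fintype.equivFin ↥(F q)) ⟨x, hx'⟩ := rfl
        rw [h2, Equiv.symm_apply_apply]
      · rw [hσfix x hx hx', hσfix x hx hx']
  have hσinj : Function.Injective fσ := Function.LeftInverse.injective hinv
  set σ : ι ≃ ι := ⟨fσ, fσ, hinv, hinv⟩ with hσ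
  set θ : (↥H) ≃ₗ[ℤ] (↥H) := b.equiv b σ with hθ
  have hθb : ∀ x : ι, θ (b x) = b (fσ x) := fun x => b.equiv_apply x b σ
  have hθθ : ∀ y : ↥H, θ (θ y) = y := by
    have hcomp : (θ.toLinearMap ∘ₗ θ.toLinearMap) = LinearMap.id := by
      apply b.ext
      intro i
      simp only [LinearMap.comp_apply, LinearMap.id_apply, LinearEquiv.coe_coe]
      rw [hθb, hθb, hinv]
    intro y
    exact LinearMap.congr_fun hcomp y
  have hreprθ : ∀ y : ↥H, b.repr (θ y) = Finsupp.mapDomain fσ (b.repr y) := by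
    have hlin : ((b.repr : (↥H) ≃ₗ[ℤ] (ι →₀ ℤ)).toLinearMap ∘ₗ θ.toLinearMap)
        = (Finsupp.lmapDomain ℤ ℤ fσ) ∘ₗ (b.repr : (↥H) ≃ₗ[ℤ] (ι →₀ ℤ)).toLinearMap := by
      apply b.ext
      intro i
      simp only [LinearMap.comp_apply, LinearEquiv.coe_coe, Finsupp.lmapDomain_apply]
      rw [hθb, b.repr_self, b.repr_self, Finsupp.mapDomain_single]
    intro y
    exact LinearMap.congr_fun hlin y
  have hθfixR : ∀ y : ↥H, (∀ i ∈ (b.repr y).support, i ∉ F p ∧ i ∉ F q) → θ y = y := by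
    intro y hy
    apply b.repr.injective
    rw [hreprθ]
    rw [Finsupp.mapDomain_congr (g := id) (fun x hx => hσfix x (hy x hx).1 (hy x hx).2)]
    rw [Finsupp.mapDomain_id]
  -- the key matching of generators
  have hθgen : ∀ k : ℕ, θ (vH p k) = vH q k := by
    intro k
    by_cases hk : k < m0
    · have hkp : k < m p := by rw [hmp]; exact hk
      have hkq : k < m q := by rw [hmq]; exact hk
      have hck := congrFun hcpq ⟨k, hk⟩
      simp only [hcode] at hck
      have h1 := congrArg Prod.fst hck
      have h2 := congrArg (fun z => z.2.1) hck
      have h3 := congrArg (fun z => z.2.2) hck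
      simp only at h1 h2 h3
      apply b.repr.injective
      rw [hreprθ]
      ext j
      have hsp : ∀ i ∈ (b.repr (vH p k)).support, i ∈ E p := hsuppE p k hkp
      have hsq : ∀ i ∈ (b.repr (vH q k)).support, i ∈ E q := hsuppE q k hkq
      by_cases hjq : j ∈ F q
      · obtain ⟨l, hl, rfl⟩ := hρsurj q j hjq
        have hlp : l < nf p := by rw [hnp, ← hnq]; exact hl
        have hstep : Finsupp.mapDomain fσ (b.repr (vH p k)) (ρ q l)
            = b.repr (vH p k) (ρ p l) := by
          rw [← hσρp l hlp]
          exact Finsupp.mapDomain_apply hσinj _ _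
        rw [hstep]
        have hln : l < n0 := by rw [← hnq]; exact hl
        have := congrFun h2 ⟨l, hln⟩
        simpa using this
      · by_cases hjR : j ∈ R
        · have hfj : fσ j = j := hσfix j (hRFp j hjR) (hRFq j hjR)
          have hstep : Finsupp.mapDomain fσ (b.repr (vH p k)) j = b.repr (vH p k) j := by
            conv_lhs => rw [← hfj]
            exact Finsupp.mapDomain_apply hσinj _ _
          rw [hstep]
          have := congrFun h1 ⟨j, hjR⟩
          simpa using this
        · -- j outside F q and R : both sides vanish
          have hjEq : j ∉ E q := fun hin => hjR (hmemEq j hin hjq)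
          have hrhs : b.repr (vH q k) j = 0 :=
            Finsupp.notMem_support_iff.1 (fun hin => hjEq (hsq j hin))
          rw [hrhs]
          have hstep : Finsupp.mapDomain fσ (b.repr (vH p k)) j = b.repr (vH p k) (fσ j) := by
            conv_lhs => rw [← hinv j]
            exact Finsupp.mapDomain_apply hσinj _ _
          rw [hstep]
          apply Finsupp.notMem_support_iff.1
          intro hin
          have hfjEp : fσ j ∈ E p := hsp _ hin
          by_cases hjp : j ∈ F p
          · have : fσ j ∈ F q := by
              rw [hσp j hjp]
              exact hρmem q _ (hidxp j hjp)
            exact hEpFq _ hfjEp this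
          · rw [hσfix j hjp hjq] at hfjEp
            exact hjR (hmemEp j hfjEp hjp)
    · have hkp : ¬ k < m p := by rw [hmp]; exact hk
      have hkq : ¬ k < m q := by rw [hmq]; exact hk
      have hvp : vH p k = 0 := by
        have hw0 : wext p k = 0 := by simp [hwext, hkp]
        simp only [hvH, hw0]
        simp
      have hvq : vH q k = 0 := by
        have hw0 : wext q k = 0 := by simp [hwext, hkq]
        simp only [hvH, hw0]
        simp
      rw [hvp, hvq, map_zero]
  have hfncode : ∀ k : ℕ, q.fn (wext q k) = p.fn (wext p k) := by
    intro k
    by_cases hk : k < m0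
    · have hck := congrFun hcpq ⟨k, hk⟩
      simp only [hcode] at hck
      have h3 := congrArg (fun z => z.2.2) hck
      simpa using h3.symm
    · have hkp : ¬ k < m p := by rw [hmp]; exact hk
      have hkq : ¬ k < m q := by rw [hmq]; exact hk
      have hw0p : wext p k = 0 := by simp [hwext, hkp]
      have hw0q : wext q k = 0 := by simp [hwext, hkq]
      rw [hw0p, hw0q, Cond.fn_zero, Cond.fn_zero]
  -- transporting conditions along θ
  have transport : ∀ (p1 q1 : Cond G e), p1 ∈ B → q1 ∈ B →
      (∀ k, θ (vH p1 k) = vH q1 k) →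
      (∀ k, q1.fn (wext q1 k) = p1.fn (wext p1 k)) →
      ∀ x : ↥H, (x : G) ∈ p1.S → (((θ x : ↥H) : G) ∈ q1.S ∧ q1.fn ↑(θ x) = p1.fn ↑x) := by
    intro p1 q1 hp1 hq1 hθg hfng x hx
    have hxspan := hspanE p1 hp1 x hx
    refine Submodule.span_induction ?_ ?_ ?_ ?_ hxspan
    · rintro y ⟨k, rfl⟩
      rw [hθg ↑k]
      constructor
      · rw [hvHcoe q1 hq1]
        exact hwextS q1 ↑k
      · rw [hvHcoe q1 hq1, hvHcoe p1 hp1]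
        exact hfng ↑k
    · rw [map_zero]
      refine ⟨by simp, ?_⟩
      have h0 : ((0 : ↥H) : G) = 0 := rfl
      rw [h0, Cond.fn_zero, Cond.fn_zero]
    · intro y z hy hz ihy ihz
      have hyS : (y : G) ∈ p1.S := hspanS p1 hp1 y hy
      have hzS : (z : G) ∈ p1.S := hspanS p1 hp1 z hz
      rw [map_add]
      constructor
      · push_cast
        exact q1.S.add_mem ihy.1 ihz.1
      · have hco : ((θ y + θ z : ↥H) : G) = ↑(θ y) + ↑(θ z) := rfl
        rw [hco, q1.fn_add ihy.1 ihz.1]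
        have hco2 : ((y + z : ↥H) : G) = ↑y + ↑z := rfl
        rw [hco2, p1.fn_add hyS hzS, ihy.2, ihz.2]
    · intro a y hy ihy
      have hyS : (y : G) ∈ p1.S := hspanS p1 hp1 y hy
      rw [map_smul]
      constructor
      · have hco : ((a • θ y : ↥H) : G) = a • ↑(θ y) := rfl
        rw [hco]
        exact q1.S.smul_mem a ihy.1
      · have hco : ((a • θ y : ↥H) : G) = a • ↑(θ y) := rfl
        have hco2 : ((a • y : ↥H) : G) = a • (y : G) := rfl
        rw [hco, hco2, q1.fn_smul a ihy.1, p1.fn_smul a hyS, ihy.2]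
  have hθgen' : ∀ k : ℕ, θ (vH q k) = vH p k := by
    intro k
    rw [← hθgen k, hθθ]
  have hθS := transport p q hpB hqB hθgen hfncode
  have hθS' := transport q p hqB hpB hθgen' (fun k => (hfncode k).symm)
  -- the projection onto the F q coordinates
  set π : (↥H) →ₗ[ℤ] (↥H) := b.constr ℤ (fun x => if x ∈ F q then b x else 0) with hπdef
  have hπb : ∀ x : ι, π (b x) = if x ∈ F q then b x else 0 := fun x =>
    b.constr_basis ℤ _ x
  have hπ0 : ∀ y : ↥H, (∀ i ∈ (b.repr y).support, i ∉ F q) → π y = 0 := by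
    intro y hy
    have hyspan : y ∈ Submodule.span ℤ (b '' ((b.repr y).support : Set ι)) :=
      mem_span_image_of_support b (fun i hi => hi)
    have hker : Submodule.span ℤ (b '' ((b.repr y).support : Set ι)) ≤ LinearMap.ker π := by
      rw [Submodule.span_le]
      rintro z ⟨i, hi, rfl⟩
      rw [SetLike.mem_coe, LinearMap.mem_ker, hπb, if_neg (hy i (Finset.mem_coe.1 hi))]
    exact LinearMap.mem_ker.1 (hker hyspan)
  have hfixEq : ∀ y : ↥H, (∀ i ∈ (b.repr y).support, i ∈ E q) → θ (y - π y) = y - π y := by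
    intro y hy
    set L : (↥H) →ₗ[ℤ] (↥H) :=
      (θ.toLinearMap ∘ₗ (LinearMap.id - π)) - (LinearMap.id - π) with hL
    have hyspan : y ∈ Submodule.span ℤ (b '' ((E q : Finset ι) : Set ι)) :=
      mem_span_image_of_support b hy
    have hker : Submodule.span ℤ (b '' ((E q : Finset ι) : Set ι)) ≤ LinearMap.ker L := by
      rw [Submodule.span_le]
      rintro z ⟨i, hi, rfl⟩
      rw [SetLike.mem_coe, LinearMap.mem_ker]
      simp only [hL, LinearMap.sub_apply, LinearMap.comp_apply, LinearMap.id_apply,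
        LinearEquiv.coe_coe]
      rw [hπb]
      by_cases hiq : i ∈ F q
      · rw [if_pos hiq]
        simp
      · rw [if_neg hiq]
        have hiR : i ∈ R := hmemEq i (Finset.mem_coe.1 hi) hiq
        simp [hθb, hσfix i (hRFp i hiR) hiq]
    have hLy : L y = 0 := LinearMap.mem_ker.1 (hker hyspan)
    simp only [hL, LinearMap.sub_apply, LinearMap.comp_apply, LinearMap.id_apply,
      LinearEquiv.coe_coe] at hLy
    rw [map_sub] at hLy ⊢
    rw [sub_eq_zero] at hLy
    exact hLy
  -- the two conditions agree on the intersection of their domains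
  have hagree : ∀ x ∈ p.S, x ∈ q.S → p.fn x = q.fn x := by
    intro x hxp hxq
    have hxH : x ∈ H := hBH p hpB hxp
    have hfix : θ ⟨x, hxH⟩ = ⟨x, hxH⟩ := by
      apply hθfixR
      intro i hi
      have hiEp : i ∈ E p := hsuppS p hpB ⟨x, hxH⟩ hxp i hi
      have hiEq : i ∈ E q := hsuppS q hqB ⟨x, hxH⟩ hxq i hi
      have hiR : i ∈ R := by
        rw [← hEpq]
        exact Finset.mem_inter.2 ⟨hiEp, hiEq⟩
      exact ⟨hRFp i hiR, hRFq i hiR⟩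
    have h2 := (hθS ⟨x, hxH⟩ hxp).2
    rw [hfix] at h2
    exact h2.symm
  obtain ⟨ψ, hψ⟩ := pushout p q hagree
  -- the extended domain
  have hWfg : (p.S ⊔ q.S).FG := p.fg.sup q.fg
  have hWT : p.S ⊔ q.S ≤ pclose (p.S ⊔ q.S) := le_pclose _
  have hTH : pclose (p.S ⊔ q.S) ≤ H :=
    pclose_le (sup_le (hBH p hpB) (hBH q hqB)) hHclosed
  haveI : Countable (p.S ⊔ q.S : Submodule ℤ G) := countable_of_fg hWfg
  haveI : Countable (pclose (p.S ⊔ q.S)) := countable_pclose _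
  have hTfree : Module.Free ℤ (pclose (p.S ⊔ q.S)) :=
    free_submodule hG _ (le_trans Cardinal.mk_le_aleph0 (Cardinal.aleph0_le_aleph 1))
  have hTfg : (pclose (p.S ⊔ q.S)).FG := fg_of_between hTfree hWfg hWT (fun u hu => hu)
  have hTclosed : ∀ (n : ℤ) (x : G), n ≠ 0 → n • x ∈ pclose (p.S ⊔ q.S) →
      x ∈ pclose (p.S ⊔ q.S) := mclosed_pclose _
  have hpW : p.S ≤ p.S ⊔ q.S := le_sup_left
  have hqW : q.S ≤ p.S ⊔ q.S := le_sup_right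
  have heW : e ∈ p.S ⊔ q.S := hpW p.mem_e
  have heT : e ∈ pclose (p.S ⊔ q.S) := hWT heW
  -- divisibility
  have hdiv : ∀ (n : ℤ) (t : G), t ∈ pclose (p.S ⊔ q.S) → n ≠ 0 →
      ∀ h : n • t ∈ p.S ⊔ q.S, (n ∣ ψ ⟨n • t, h⟩) := by
    intro n t htT hn hmem
    obtain ⟨a, ha, c, hc, hac⟩ := Submodule.mem_sup.1 hmem
    have hψval : ψ ⟨n • t, hmem⟩ = p.fn a + q.fn c := by
      have h2 := hψ a c ha hc (hac ▸ hmem)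
      rw [show (⟨n • t, hmem⟩ : ↥(p.S ⊔ q.S)) = ⟨a + c, hac ▸ hmem⟩ from Subtype.ext hac.symm]
      exact h2
    have htH : t ∈ H := hTH htT
    have haH : a ∈ H := hBH p hpB ha
    have hcH : c ∈ H := hBH q hqB hc
    set t' : ↥H := ⟨t, htH⟩ with ht'
    set a' : ↥H := ⟨a, haH⟩ with ha'
    set c' : ↥H := ⟨c, hcH⟩ with hc'
    have hsum : a' + c' = n • t' := Subtype.ext (by exact hac)
    set s' : ↥H := t' + θ (π t') - π t' with hs'
    have hπa : π a' = 0 := by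
      apply hπ0
      intro i hi
      exact hEpFq i (hsuppS p hpB a' ha i hi)
    have hfixc : θ (c' - π c') = c' - π c' := by
      apply hfixEq
      intro i hi
      exact hsuppS q hqB c' hc i hi
    have hkey : n • s' = a' + θ c' := by
      have h1 : n • s' = n • t' + θ (π (n • t')) - π (n • t') := by
        rw [hs', smul_sub, smul_add, map_smul, map_smul]
      rw [← hsum] at h1
      rw [map_add, map_add, hπa, map_zero, zero_add, zero_add] at h1
      have h2 : θ (π c') = θ c' - (c' - π c') := by
        rw [← hfixc, map_sub]
        abel
      rw [h2] at h1
      rw [h1]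
      abel
    have hθc'S : ((θ c' : ↥H) : G) ∈ p.S := (hθS' c' hc).1
    have hcoekey : n • (s' : G) = a + ((θ c' : ↥H) : G) := by
      have := congrArg (Subtype.val : ↥H → G) hkey
      push_cast at this
      exact this
    have hs'S : (s' : G) ∈ p.S := by
      apply p.closed n (s' : G) hn
      rw [hcoekey]
      exact p.S.add_mem ha hθc'S
    have hcalc : p.fn a + q.fn c = n * p.fn (s' : G) := by
      have hqc : q.fn c = p.fn ((θ c' : ↥H) : G) := ((hθS' c' hc).2).symm
      rw [hqc, ← p.fn_add ha hθc'S, ← hcoekey, p.fn_smul n hs'S]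
    rw [hψval, hcalc]
    exact ⟨p.fn (s' : G), rfl⟩
  -- extend to the pure closure
  obtain ⟨ψ', hψ'⟩ := extend_div hWT (fun t ht => ht) ψ hdiv
  have hψ'W : ∀ (x : G) (hx : x ∈ p.S ⊔ q.S), ψ' ⟨x, hWT hx⟩ = ψ ⟨x, hx⟩ := hψ'
  have hψ'e : ψ' ⟨e, heT⟩ = 1 := by
    have h0 : ψ ⟨e, heW⟩ = p.fn e + q.fn 0 := by
      have h2 := hψ e 0 p.mem_e q.S.zero_mem (by simpa using heW)
      rw [show (⟨e, heW⟩ : ↥(p.S ⊔ q.S)) = ⟨e + 0, by simpa using heW⟩ from Subtype.ext (by simp)]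
      exact h2
    rw [show (⟨e, heT⟩ : ↥(pclose (p.S ⊔ q.S))) = ⟨e, hWT heW⟩ from rfl,
      hψ'W e heW, h0, Cond.fn_e, Cond.fn_zero]
    ring
  set r : Cond G e := ⟨pclose (p.S ⊔ q.S), ψ', hTfg, hTclosed, heT, hψ'e⟩ with hr
  have hfnr : ∀ (x : G) (hx : x ∈ p.S ⊔ q.S), r.fn x = ψ ⟨x, hx⟩ := by
    intro x hx
    rw [Cond.fn_mem r (show x ∈ r.S from hWT hx)]
    exact hψ'W x hx
  have hple : p ≤ r := by
    constructor
    · exact le_trans hpW hWT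
    · intro x hx
      have hxW : x ∈ p.S ⊔ q.S := hpW hx
      rw [hfnr x hxW]
      have h2 := hψ x 0 hx q.S.zero_mem (by simpa using hxW)
      rw [show (⟨x, hxW⟩ : ↥(p.S ⊔ q.S)) = ⟨x + 0, by simpa using hxW⟩ from Subtype.ext (by simp)]
      rw [h2, Cond.fn_zero, add_zero]
  have hqle : q ≤ r := by
    constructor
    · exact le_trans hqW hWT
    · intro x hx
      have hxW : x ∈ p.S ⊔ q.S := hqW hx
      rw [hfnr x hxW]
      have h2 := hψ 0 x p.S.zero_mem hx (by simpa using hxW)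
      rw [show (⟨x, hxW⟩ : ↥(p.S ⊔ q.S)) = ⟨0 + x, by simpa using hxW⟩ from Subtype.ext (by simp)]
      rw [h2, Cond.fn_zero, zero_add]
  exact hA p (hBA hpB) q (hBA hqB) hpq ⟨r, hple, hqle⟩

end CCC

section Main

variable {G : Type} [AddCommGroup G] {e : G}

theorem nzsd_of_hG {G : Type} [AddCommGroup G]
    (hG : ∀ S : AddSubgroup G, #S ≤ Cardinal.aleph 1 → Module.Free ℤ S) :
    NoZeroSMulDivisors ℤ G := by
  constructor
  intro n x h
  by_cases hn : n = 0
  · exact Or.inl hn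
  refine Or.inr ?_
  have hfg : (Submodule.span ℤ ({x} : Set G)).FG := Submodule.fg_span_singleton x
  haveI : Countable (Submodule.span ℤ ({x} : Set G)) := countable_of_fg hfg
  haveI := free_submodule hG (Submodule.span ℤ ({x} : Set G))
    (le_trans Cardinal.mk_le_aleph0 (Cardinal.aleph0_le_aleph 1))
  have hxm : x ∈ Submodule.span ℤ ({x} : Set G) := Submodule.mem_span_singleton_self x
  have h0 : n • (⟨x, hxm⟩ : Submodule.span ℤ ({x} : Set G)) = 0 := by
    apply Subtype.ext
    simpa using h
  rcases smul_eq_zero.1 h0 with h1 | h1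
  · exact absurd h1 hn
  · simpa using congrArg (Subtype.val) h1

/-- Density of the sets `D_g`. -/
theorem exists_ge_mem [NoZeroSMulDivisors ℤ G]
    (hG : ∀ S : AddSubgroup G, #S ≤ Cardinal.aleph 1 → Module.Free ℤ S)
    (p : Cond G e) (g : G) : ∃ q : Cond G e, p ≤ q ∧ g ∈ q.S := by
  have hWfg : (p.S ⊔ Submodule.span ℤ ({g} : Set G)).FG :=
    p.fg.sup (Submodule.fg_span_singleton g)
  haveI : Countable (p.S ⊔ Submodule.span ℤ ({g} : Set G) : Submodule ℤ G) :=
    countable_of_fg hWfg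
  haveI : Countable (pclose (p.S ⊔ Submodule.span ℤ ({g} : Set G))) := countable_pclose _
  have hWT : p.S ⊔ Submodule.span ℤ ({g} : Set G)
      ≤ pclose (p.S ⊔ Submodule.span ℤ ({g} : Set G)) := le_pclose _
  have hTfree : Module.Free ℤ (pclose (p.S ⊔ Submodule.span ℤ ({g} : Set G))) :=
    free_submodule hG _ (le_trans Cardinal.mk_le_aleph0 (Cardinal.aleph0_le_aleph 1))
  have hTfg : (pclose (p.S ⊔ Submodule.span ℤ ({g} : Set G))).FG :=
    fg_of_between hTfree hWfg hWT (fun u hu => hu)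
  have hpT : p.S ≤ pclose (p.S ⊔ Submodule.span ℤ ({g} : Set G)) :=
    le_trans le_sup_left hWT
  obtain ⟨ψ, hψ⟩ := extend_mclosed hpT p.closed hTfg p.φ
  have hmem_e : e ∈ pclose (p.S ⊔ Submodule.span ℤ ({g} : Set G)) := hpT p.mem_e
  have hmap_e : ψ ⟨e, hmem_e⟩ = 1 := by
    rw [show (⟨e, hmem_e⟩ : ↥(pclose (p.S ⊔ Submodule.span ℤ ({g} : Set G))))
      = ⟨e, hpT p.mem_e⟩ from rfl, hψ e p.mem_e, p.map_e]
  refine ⟨⟨pclose (p.S ⊔ Submodule.span ℤ ({g} : Set G)), ψ, hTfg, mclosed_pclose _,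
    hmem_e, hmap_e⟩, ⟨hpT, ?_⟩, ?_⟩
  · intro x hx
    show Cond.fn _ x = p.fn x
    rw [Cond.fn_mem _ (show x ∈ pclose (p.S ⊔ Submodule.span ℤ ({g} : Set G)) from hpT hx),
      p.fn_mem hx]
    exact hψ x hx
  · show g ∈ pclose (p.S ⊔ Submodule.span ℤ ({g} : Set G))
    exact hWT ((le_sup_right : Submodule.span ℤ ({g} : Set G) ≤ _)
      (Submodule.mem_span_singleton_self g))

end Main

end Sep51

/-- **Theorem 5.1.** Assume Martin's Axiom (for every nonempty ccc partial order and any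
family of fewer than `2^ℵ₀` dense sets there is an upward-directed set meeting all of
them).  Then every `ℵ₂`-free abelian group `G` (every subgroup of cardinality `≤ ℵ₁` is
free abelian) of cardinality `< 2^ℵ₀` is separable: for every `e ∈ G` of infinite order
generating a pure cyclic subgroup, `⟨e⟩` is a direct summand of `G`; equivalently there
is a homomorphism `Φ : G → ℤ` with `Φ e = 1`. -/
theorem separable_of_martins_axiom
    (MA : ∀ (P : Type) [PartialOrder P], Nonempty P →
      (∀ A : Set P, (∀ p ∈ A, ∀ q ∈ A, p ≠ q → ¬∃ r : P, p ≤ r ∧ q ≤ r) → A.Countable) →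
      ∀ D : Set (Set P), Cardinal.mk D < Cardinal.continuum →
        (∀ d ∈ D, ∀ p : P, ∃ q ∈ d, p ≤ q) →
        ∃ F : Set P, (∀ p ∈ F, ∀ q ∈ F, ∃ r ∈ F, p ≤ r ∧ q ≤ r) ∧ ∀ d ∈ D, (F ∩ d).Nonempty)
    (G : Type) [AddCommGroup G]
    (hG : ∀ S : AddSubgroup G, Cardinal.mk S ≤ Cardinal.aleph 1 → Module.Free ℤ S)
    (hcard : Cardinal.mk G < Cardinal.continuum)
    (e : G) (he : ∀ n : ℤ, n ≠ 0 → n • e ≠ 0)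
    (hpure : ∀ n : ℕ, 0 < n → ∀ x ∈ AddSubgroup.zmultiples e,
      (∃ g : G, (n : ℤ) • g = x) → ∃ u ∈ AddSubgroup.zmultiples e, (n : ℤ) • u = x) :
    (∃ B : AddSubgroup G, AddSubgroup.zmultiples e ⊓ B = ⊥ ∧ AddSubgroup.zmultiples e ⊔ B = ⊤) ∧
    (∃ Φ : G →+ ℤ, Φ e = 1) := by
  classical
  haveI : NoZeroSMulDivisors ℤ G := Sep51.nzsd_of_hG hG
  have hene : e ≠ 0 := by
    intro h
    exact he 1 one_ne_zero (by simp [h])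
  obtain ⟨p0, hp0⟩ := Sep51.exists_base (G := G) (e := e) he hpure
  -- the dense sets
  have hDdense : ∀ d ∈ Set.range (fun g : G => {p : Sep51.Cond G e | g ∈ p.S}),
      ∀ p : Sep51.Cond G e, ∃ q ∈ d, p ≤ q := by
    rintro d ⟨g, rfl⟩ p
    obtain ⟨q, hpq, hg⟩ := Sep51.exists_ge_mem hG p g
    exact ⟨q, hg, hpq⟩
  have hDcard : Cardinal.mk ↥(Set.range (fun g : G => {p : Sep51.Cond G e | g ∈ p.S}))
      < Cardinal.continuum := lt_of_le_of_lt Cardinal.mk_range_le hcard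
  obtain ⟨F, hFdir, hFmeet⟩ := MA (Sep51.Cond G e) ⟨p0⟩
    (fun A hinc => Sep51.cond_ccc hG hene A hinc)
    (Set.range (fun g : G => {p : Sep51.Cond G e | g ∈ p.S})) hDcard hDdense
  have hmeet : ∀ g : G, ∃ p, p ∈ F ∧ g ∈ p.S := by
    intro g
    obtain ⟨p, hpF, hpD⟩ := hFmeet _ ⟨g, rfl⟩
    exact ⟨p, hpF, hpD⟩
  choose sel hselF hselS using hmeet
  have hval : ∀ (p : Sep51.Cond G e), p ∈ F → ∀ g, g ∈ p.S → p.fn g = (sel g).fn g := by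
    intro p hpF g hg
    obtain ⟨r, hrF, h1, h2⟩ := hFdir p hpF (sel g) (hselF g)
    rw [← Sep51.Cond.fn_of_le h1 hg, ← Sep51.Cond.fn_of_le h2 (hselS g)]
  have hfadd : ∀ g1 g2 : G, (sel (g1 + g2)).fn (g1 + g2) = (sel g1).fn g1 + (sel g2).fn g2 := by
    intro g1 g2
    obtain ⟨r1, hr1F, h11, h12⟩ := hFdir (sel g1) (hselF g1) (sel g2) (hselF g2)
    obtain ⟨r, hrF, h21, h22⟩ := hFdir r1 hr1F (sel (g1 + g2)) (hselF (g1 + g2))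
    have hg1 : g1 ∈ r.S := h21.1 (h11.1 (hselS g1))
    have hg2 : g2 ∈ r.S := h21.1 (h12.1 (hselS g2))
    have hg12 : g1 + g2 ∈ r.S := h22.1 (hselS (g1 + g2))
    calc (sel (g1 + g2)).fn (g1 + g2) = r.fn (g1 + g2) := (hval r hrF _ hg12).symm
      _ = r.fn g1 + r.fn g2 := r.fn_add hg1 hg2
      _ = (sel g1).fn g1 + (sel g2).fn g2 := by
          rw [hval r hrF g1 hg1, hval r hrF g2 hg2]
  set Φ : G →+ ℤ := AddMonoidHom.mk' (fun g => (sel g).fn g) hfadd with hΦ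
  have hΦe : Φ e = 1 := by
    show (sel e).fn e = 1
    exact Sep51.Cond.fn_e _
  refine ⟨⟨Φ.ker, ?_, ?_⟩, ⟨Φ, hΦe⟩⟩
  · -- zmultiples e ⊓ ker Φ = ⊥
    rw [eq_bot_iff]
    intro x hx
    obtain ⟨hx1, hx2⟩ := hx
    obtain ⟨k, hk⟩ := AddSubgroup.mem_zmultiples_iff.1 hx1
    have h0 : Φ x = 0 := hx2
    rw [← hk] at h0 ⊢
    rw [map_zsmul, hΦe, smul_eq_mul, mul_one] at h0
    rw [AddSubgroup.mem_bot, h0, zero_smul]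
  · -- zmultiples e ⊔ ker Φ = ⊤
    rw [eq_top_iff]
    intro g _
    have hmem1 : Φ g • e ∈ AddSubgroup.zmultiples e :=
      AddSubgroup.mem_zmultiples_iff.2 ⟨Φ g, rfl⟩
    have hmem2 : g - Φ g • e ∈ Φ.ker := by
      rw [AddMonoidHom.mem_ker, map_sub, map_zsmul, hΦe, smul_eq_mul, mul_one, sub_self]
    have : g = Φ g • e + (g - Φ g • e) := by abel
    rw [this]
    exact AddSubgroup.add_mem _
      ((le_sup_left : AddSubgroup.zmultiples e ≤ _) hmem1)
      ((le_sup_right : Φ.ker ≤ _) hmem2)
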